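/- Let M be the set of Δ×Δ matrices over F_2 of rank exactly r in which every row and every column has Hamming weight strictly less than t, where t ≤ Δ/2. Then |M| ≤ 2^{2rΔ h(t/Δ) + 2Δ h(r/Δ)}, where h is the binary entropy function. -/

import Mathlib

open Real Finset Submodule Module Matrix
open Real Finset

noncomputable def binEnt (p : ℝ) : ℝ := -p * Real.logb 2 p - (1 - p) * Real.logb 2 (1 - p)

lemma ent_eq (n k : ℕ) (hk0 : 0 < k) (hkn : k < n) :
    (2:ℝ) ^ ((n:ℝ) * binEnt (k/n)) = (((k:ℝ)/n)^k * (1 - (k:ℝ)/n)^(n-k))⁻¹ := by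
  have hn : (0:ℝ) < n := by exact_mod_cast hk0.trans hkn
  have hk0r : (0:ℝ) < k := by exact_mod_cast hk0
  have hp : (0:ℝ) < (k:ℝ)/n := div_pos hk0r hn
  have hq : (0:ℝ) < 1 - (k:ℝ)/n := by
    rw [sub_pos, div_lt_one hn]; exact_mod_cast hkn
  have hnk : ((n - k : ℕ) : ℝ) = (n:ℝ) - k := by
    rw [Nat.cast_sub hkn.le]
  have h1 : (n:ℝ) * binEnt ((k:ℝ)/n) =
      Real.logb 2 ((k:ℝ)/n) * (-(k:ℝ)) + Real.logb 2 (1 - (k:ℝ)/n) * (-(((n-k:ℕ)):ℝ)) := by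
    rw [hnk, binEnt]; field_simp; ring
  rw [h1, Real.rpow_add two_pos, Real.rpow_mul (by norm_num : (0:ℝ) ≤ 2),
    Real.rpow_mul (by norm_num : (0:ℝ) ≤ 2), Real.rpow_logb two_pos (by norm_num) hp,
    Real.rpow_logb two_pos (by norm_num) hq, Real.rpow_neg hp.le, Real.rpow_neg hq.le,
    Real.rpow_natCast, Real.rpow_natCast, mul_inv]

lemma binEnt_zero : binEnt 0 = 0 := by simp [binEnt]
lemma binEnt_one : binEnt 1 = 0 := by simp [binEnt]

lemma choose_le_ent (n k : ℕ) :
    (n.choose k : ℝ) ≤ (2:ℝ) ^ ((n:ℝ) * binEnt (k/n)) := by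
  rcases lt_or_ge n k with h | hkn
  · rw [Nat.choose_eq_zero_of_lt h, Nat.cast_zero]; positivity
  rcases Nat.eq_zero_or_pos k with rfl | hk0
  · simp [binEnt_zero]
  rcases eq_or_lt_of_le hkn with rfl | hkn
  · have hn : (0:ℝ) < k := by exact_mod_cast hk0
    rw [div_self hn.ne', binEnt_one, mul_zero, Real.rpow_zero, Nat.choose_self, Nat.cast_one]
  -- main case 0 < k < n
  have hn : (0:ℝ) < n := by exact_mod_cast hk0.trans hkn
  set p : ℝ := (k:ℝ)/n with hpdef
  have hp : (0:ℝ) < p := div_pos (by exact_mod_cast hk0) hn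
  have hq : (0:ℝ) < 1 - p := by
    rw [sub_pos, hpdef, div_lt_one hn]; exact_mod_cast hkn
  have hsum : ∑ j ∈ Finset.range (n+1), p ^ j * (1-p) ^ (n - j) * (n.choose j : ℝ) = 1 := by
    rw [← add_pow]; norm_num
  have key : (n.choose k : ℝ) * (p ^ k * (1-p) ^ (n-k)) ≤ 1 := by
    refine le_of_le_of_eq ?_ hsum
    calc (n.choose k : ℝ) * (p ^ k * (1-p) ^ (n-k))
        = p ^ k * (1-p) ^ (n - k) * (n.choose k : ℝ) := by ring
      _ ≤ _ := Finset.single_le_sum (f := fun j => p ^ j * (1-p) ^ (n - j) * (n.choose j : ℝ))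
          (fun j _ => by positivity) (Finset.mem_range.mpr (by omega))
  rw [ent_eq n k hk0 hkn, inv_eq_one_div, le_div_iff₀ (by positivity)]
  exact key


lemma sum_choose_le_ent (n t : ℕ) (ht : 2 * t ≤ n) :
    (∑ j ∈ Finset.range t, (n.choose j : ℝ)) ≤ (2:ℝ) ^ ((n:ℝ) * binEnt (t/n)) := by
  rcases Nat.eq_zero_or_pos t with rfl | ht0
  · simp; positivity
  have htn : t < n := by omega
  have hn : (0:ℝ) < n := by exact_mod_cast ht0.trans htn
  set p : ℝ := (t:ℝ)/n with hpdef
  have hp : (0:ℝ) < p := div_pos (by exact_mod_cast ht0) hn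
  have hq : (0:ℝ) < 1 - p := by
    rw [sub_pos, hpdef, div_lt_one hn]; exact_mod_cast htn
  have hph : p ≤ 1 - p := by
    rw [le_sub_iff_add_le, ← two_mul, hpdef, ← mul_div_assoc, div_le_one hn]
    exact_mod_cast ht
  have hsum : ∑ j ∈ Finset.range (n+1), p ^ j * (1-p) ^ (n - j) * (n.choose j : ℝ) = 1 := by
    rw [← add_pow]; norm_num
  have key : (∑ j ∈ Finset.range t, (n.choose j : ℝ)) * (p ^ t * (1-p) ^ (n-t)) ≤ 1 := by
    refine le_of_le_of_eq ?_ hsum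
    rw [Finset.sum_mul]
    have step : ∀ j ∈ Finset.range t,
        (n.choose j : ℝ) * (p ^ t * (1-p) ^ (n-t)) ≤ p ^ j * (1-p) ^ (n - j) * (n.choose j : ℝ) := by
      intro j hj
      have hjt : j ≤ t := (Finset.mem_range.mp hj).le
      have h1 : p ^ t = p ^ j * p ^ (t - j) := by rw [← pow_add]; congr 1; omega
      have h2 : (1-p) ^ (n-j) = (1-p) ^ (t - j) * (1-p) ^ (n-t) := by
        rw [← pow_add]; congr 1; omega
      have h3 : p ^ (t-j) ≤ (1-p) ^ (t-j) := pow_le_pow_left₀ hp.le hph _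
      have h4 : p^(t-j) * (1-p)^(n-t) ≤ (1-p)^(t-j) * (1-p)^(n-t) :=
        mul_le_mul_of_nonneg_right h3 (pow_nonneg hq.le _)
      rw [h1, h2]
      calc (n.choose j : ℝ) * (p^j*p^(t-j) * (1-p)^(n-t))
          = ((n.choose j : ℝ) * p^j) * (p^(t-j)*(1-p)^(n-t)) := by ring
        _ ≤ ((n.choose j : ℝ) * p^j) * ((1-p)^(t-j)*(1-p)^(n-t)) :=
            mul_le_mul_of_nonneg_left h4 (by positivity)
        _ = p^j * ((1-p)^(t-j)*(1-p)^(n-t)) * (n.choose j : ℝ) := by ring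
    refine (Finset.sum_le_sum step).trans ?_
    exact Finset.sum_le_sum_of_subset_of_nonneg
      (Finset.range_subset_range.mpr (by omega)) (fun j _ _ => by positivity)
  rw [ent_eq n t ht0 htn, inv_eq_one_div, le_div_iff₀ (by positivity)]
  exact key
open Finset Submodule Module Matrix

variable {K : Type*} [Field K] {n : ℕ}

/-- Existence of a spanning finset of rows of the right cardinality. -/
lemma exists_spanning_finset (f : Fin n → (Fin n → K)) :
    ∃ s : Finset (Fin n), s.card = finrank K (span K (Set.range f)) ∧
      span K (f '' ↑s) = span K (Set.range f) := by
  obtain ⟨b, hbsub, hbspan, hbind⟩ := exists_linearIndependent K (Set.range f)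
  have hbfin : b.Finite := hbind.setFinite
  haveI : Fintype b := hbfin.fintype
  have hcard : finrank K (span K b) = b.toFinset.card := by
    rw [finrank_span_set_eq_card hbind]
  have hch : ∀ v : b, ∃ i, f i = (v : Fin n → K) := fun v => hbsub v.2
  let gi : b → Fin n := fun v => (hch v).choose
  have hgi : ∀ v : b, f (gi v) = (v : Fin n → K) := fun v => (hch v).choose_spec
  have hinj : Function.Injective gi := by
    intro v w h
    have := hgi v
    rw [h, hgi w] at this
    exact Subtype.ext this.symm
  refine ⟨Finset.image gi Finset.univ, ?_, ?_⟩
  · rw [Finset.card_image_of_injective _ hinj, Finset.card_univ, ← hbspan, hcard,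
      Set.toFinset_card]
  · have himg : f '' ↑(Finset.image gi Finset.univ) = b := by
      ext v
      constructor
      · rintro ⟨i, hi, rfl⟩
        simp only [Finset.coe_image, Set.mem_image] at hi
        obtain ⟨w, -, rfl⟩ := hi
        rw [hgi w]; exact w.2
      · intro hv
        exact ⟨gi ⟨v, hv⟩, by simp, hgi ⟨v, hv⟩⟩
    rw [himg, hbspan]

/-- Reconstruction/uniqueness lemma. -/
lemma matrix_eq_of_data (M M' : Matrix (Fin n) (Fin n) K) (R C : Finset (Fin n))
    (hRM : span K (M '' ↑R) = span K (Set.range M))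
    (hCM' : span K ((M')ᵀ '' ↑C) = span K (Set.range (M')ᵀ))
    (hR : ∀ i ∈ R, M i = M' i)
    (hC : ∀ j ∈ C, Mᵀ j = (M')ᵀ j) : M = M' := by
  classical
  set V : Submodule K (Fin n → K) := span K (Set.range Mᵀ) with hV
  set pr : (Fin n → K) →ₗ[K] ({x // x ∈ R} → K) := LinearMap.funLeft K K ((↑) : {x // x ∈ R} → Fin n)
  set MR : Matrix {x // x ∈ R} (Fin n) K := M.submatrix ((↑) : {x // x ∈ R} → Fin n) id with hMR
  -- map pr V is the column space of MR
  have hmap : V.map pr = span K (Set.range MRᵀ) := by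
    rw [hV, Submodule.map_span]
    congr 1
    refine (Set.range_comp _ _).symm.trans ?_
    congr 1
  -- rows of MR are the R-rows of M
  have hrowsMR : Set.range MR = M '' ↑R := by
    rw [hMR]
    ext v
    constructor
    · rintro ⟨i, rfl⟩; exact ⟨↑i, i.2, rfl⟩
    · rintro ⟨i, hi, rfl⟩; exact ⟨⟨i, hi⟩, rfl⟩
  have hfr1 : finrank K (V.map pr) = M.rank := by
    rw [hmap]
    refine (Matrix.rank_eq_finrank_span_cols MR).symm.trans ?_
    refine (Matrix.rank_eq_finrank_span_row MR).trans ?_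
    refine (congrArg (fun s => finrank K (span K s)) hrowsMR).trans ?_
    rw [hRM]
    exact (Matrix.rank_eq_finrank_span_row M).symm
  have hfr2 : finrank K V = M.rank := by
    rw [hV]
    exact (Matrix.rank_eq_finrank_span_cols M).symm
  -- injectivity of π on V
  have hinj : ∀ v ∈ V, pr v = 0 → v = 0 := by
    intro v hv hprv
    have hrn := LinearMap.finrank_range_add_finrank_ker (pr.domRestrict V)
    rw [LinearMap.range_domRestrict, hfr1] at hrn
    have hker : finrank K (LinearMap.ker (pr.domRestrict V)) = 0 := by
      have : finrank K V = M.rank := hfr2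
      omega
    have hkerbot : LinearMap.ker (pr.domRestrict V) = ⊥ :=
      Submodule.finrank_eq_zero.mp hker
    have : (⟨v, hv⟩ : V) ∈ LinearMap.ker (pr.domRestrict V) := by
      simp [LinearMap.mem_ker, LinearMap.domRestrict_apply, hprv]
    rw [hkerbot, Submodule.mem_bot] at this
    exact congrArg Subtype.val this
  -- columns of M' lie in V
  have hcolM' : ∀ j, (M')ᵀ j ∈ V := by
    intro j
    have h1 : (M')ᵀ j ∈ span K (Set.range (M')ᵀ) := subset_span ⟨j, rfl⟩
    rw [← hCM'] at h1
    have h2 : span K ((M')ᵀ '' ↑C) ≤ V := by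
      rw [span_le]
      rintro v ⟨i, hi, rfl⟩
      rw [← hC i hi]
      exact subset_span ⟨i, rfl⟩
    exact h2 h1
  -- finish
  have hcols : ∀ j, Mᵀ j = (M')ᵀ j := by
    intro j
    have hd : Mᵀ j - (M')ᵀ j ∈ V := sub_mem (subset_span ⟨j, rfl⟩) (hcolM' j)
    have hprd : pr (Mᵀ j - (M')ᵀ j) = 0 := by
      funext i
      simp only [pr, map_sub, Pi.sub_apply, LinearMap.funLeft_apply, Pi.zero_apply,
        Matrix.transpose_apply]
      rw [hR i i.2]
      ring
    have := hinj _ hd hprd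
    rwa [sub_eq_zero] at this
  ext i j
  have := congrFun (hcols j) i
  simpa using this




lemma card_lowweight (Δ t : ℕ) :
    (Nat.card {v : Fin Δ → ZMod 2 // (Finset.univ.filter fun i => v i ≠ 0).card < t} : ℕ) ≤
      ∑ j ∈ Finset.range t, (Δ.choose j) := by
  classical
  have hinj : Function.Injective
      (fun v : {v : Fin Δ → ZMod 2 // (Finset.univ.filter fun i => v i ≠ 0).card < t} =>
        (⟨Finset.univ.filter fun i => (v : Fin Δ → ZMod 2) i ≠ 0, v.2⟩ :
          {s : Finset (Fin Δ) // s.card < t})) := by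
    rintro ⟨v, hv⟩ ⟨w, hw⟩ h
    simp only [Subtype.mk.injEq] at h ⊢
    funext i
    have h01 : ∀ a : ZMod 2, a = 0 ∨ a = 1 := by decide
    have hmem := Finset.ext_iff.mp h i
    simp only [Finset.mem_filter, Finset.mem_univ, true_and] at hmem
    rcases h01 (v i) with h1 | h1 <;> rcases h01 (w i) with h2 | h2 <;>
      simp_all
  have hle := Nat.card_le_card_of_injective _ hinj
  have hcard : Nat.card {s : Finset (Fin Δ) // s.card < t} =
      ∑ j ∈ Finset.range t, (Δ.choose j) := by
    rw [Nat.card_eq_fintype_card, Fintype.card_subtype]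
    have : (Finset.univ.filter fun s : Finset (Fin Δ) => s.card < t) =
        (Finset.range t).biUnion (fun j => Finset.powersetCard j Finset.univ) := by
      ext s
      simp [Finset.mem_powersetCard, Finset.mem_biUnion]
    rw [this, Finset.card_biUnion]
    · refine Finset.sum_congr rfl fun j _ => ?_
      rw [Finset.card_powersetCard, Finset.card_univ, Fintype.card_fin]
    · intro a _ b _ hab
      simp only [Finset.disjoint_left, Finset.mem_powersetCard]
      rintro s ⟨-, h1⟩ ⟨-, h2⟩
      exact hab (h1 ▸ h2 ▸ rfl)
  rw [← hcard]; exact hle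


lemma orderEmbOfFin_congr {α : Type*} [LinearOrder α] {s s' : Finset α} {k : ℕ} (h : s = s')
    (hs : s.card = k) (hs' : s'.card = k) :
    ((s.orderEmbOfFin hs : Fin k ↪o α) : Fin k → α) = s'.orderEmbOfFin hs' := by
  subst h; rfl

noncomputable def rowFinset {n : ℕ} (M : Matrix (Fin n) (Fin n) (ZMod 2)) : Finset (Fin n) :=
  (exists_spanning_finset M).choose

lemma rowFinset_card {n : ℕ} (M : Matrix (Fin n) (Fin n) (ZMod 2)) :
    (rowFinset M).card = M.rank :=
  (exists_spanning_finset M).choose_spec.1.trans (Matrix.rank_eq_finrank_span_row M).symm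

lemma rowFinset_span {n : ℕ} (M : Matrix (Fin n) (Fin n) (ZMod 2)) :
    span (ZMod 2) (M '' ↑(rowFinset M)) = span (ZMod 2) (Set.range M) :=
  (exists_spanning_finset M).choose_spec.2

/-- The number of `Δ×Δ` matrices over `F₂` of rank exactly `r` in which
every row and every column has Hamming weight `< t` (with `t ≤ Δ/2`) is at most
`2^(2rΔ h(t/Δ) + 2Δ h(r/Δ))`. -/
theorem stmt_3 (Δ r t : ℕ) (ht : 2 * t ≤ Δ) :
    (Nat.card {c : Matrix (Fin Δ) (Fin Δ) (ZMod 2) //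
        c.rank = r ∧
        (∀ i, (Finset.univ.filter fun j => c i j ≠ 0).card < t) ∧
        (∀ j, (Finset.univ.filter fun i => c i j ≠ 0).card < t)} : ℝ) ≤
      (2 : ℝ) ^ (2 * (r : ℝ) * Δ * binEnt (t / Δ) + 2 * (Δ : ℝ) * binEnt (r / Δ)) := by
  classical
  set Vt := {v : Fin Δ → ZMod 2 // (Finset.univ.filter fun i => v i ≠ 0).card < t} with hVt
  set S := {c : Matrix (Fin Δ) (Fin Δ) (ZMod 2) //
        c.rank = r ∧
        (∀ i, (Finset.univ.filter fun j => c i j ≠ 0).card < t) ∧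
        (∀ j, (Finset.univ.filter fun i => c i j ≠ 0).card < t)} with hS
  set T := ({R : Finset (Fin Δ) // R.card = r} × {C : Finset (Fin Δ) // C.card = r} ×
      (Fin r → Vt) × (Fin r → Vt)) with hT
  have hcardR : ∀ c : S, (rowFinset c.1).card = r := fun c => (rowFinset_card c.1).trans c.2.1
  have hcardC : ∀ c : S, (rowFinset c.1ᵀ).card = r := fun c => by
    rw [rowFinset_card, Matrix.rank_transpose]; exact c.2.1
  let F : S → T := fun c =>
    (⟨rowFinset c.1, hcardR c⟩, ⟨rowFinset c.1ᵀ, hcardC c⟩,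
      fun k => ⟨c.1 ((rowFinset c.1).orderEmbOfFin (hcardR c) k), c.2.2.1 _⟩,
      fun k => ⟨fun i => c.1 i ((rowFinset c.1ᵀ).orderEmbOfFin (hcardC c) k), c.2.2.2 _⟩)
  have hFinj : Function.Injective F := by
    intro c c' h
    have hRR : rowFinset c.1 = rowFinset c'.1 :=
      congrArg (fun x : T => (x.1 : Finset (Fin Δ))) h
    have hCC : rowFinset c.1ᵀ = rowFinset c'.1ᵀ :=
      congrArg (fun x : T => (x.2.1 : Finset (Fin Δ))) h
    have hembR : (((rowFinset c.1).orderEmbOfFin (hcardR c) : Fin r ↪o Fin Δ) : Fin r → Fin Δ) =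
        ((rowFinset c'.1).orderEmbOfFin (hcardR c')) := orderEmbOfFin_congr hRR _ _
    have hembC : (((rowFinset c.1ᵀ).orderEmbOfFin (hcardC c) : Fin r ↪o Fin Δ) : Fin r → Fin Δ) =
        ((rowFinset c'.1ᵀ).orderEmbOfFin (hcardC c')) := orderEmbOfFin_congr hCC _ _
    have hrows : ∀ k, c.1 ((rowFinset c.1).orderEmbOfFin (hcardR c) k) =
        c'.1 ((rowFinset c'.1).orderEmbOfFin (hcardR c') k) := fun k =>
      congrArg (fun x : T => (x.2.2.1 k : Fin Δ → ZMod 2)) h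
    have hcols : ∀ k i, c.1 i ((rowFinset c.1ᵀ).orderEmbOfFin (hcardC c) k) =
        c'.1 i ((rowFinset c'.1ᵀ).orderEmbOfFin (hcardC c') k) := fun k i =>
      congrFun (congrArg (fun x : T => (x.2.2.2 k : Fin Δ → ZMod 2)) h) i
    have hR : ∀ i ∈ rowFinset c.1, c.1 i = c'.1 i := by
      intro i hi
      have : (i : Fin Δ) ∈ Set.range ((rowFinset c.1).orderEmbOfFin (hcardR c)) := by
        rw [Finset.range_orderEmbOfFin]; exact hi
      obtain ⟨k, hk⟩ := this
      rw [← hk, hrows k, ← hembR]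
    have hC : ∀ j ∈ rowFinset c.1ᵀ, c.1ᵀ j = c'.1ᵀ j := by
      intro j hj
      have : (j : Fin Δ) ∈ Set.range ((rowFinset c.1ᵀ).orderEmbOfFin (hcardC c)) := by
        rw [Finset.range_orderEmbOfFin]; exact hj
      obtain ⟨k, hk⟩ := this
      funext i
      simp only [Matrix.transpose_apply]
      rw [← hk, hcols k i, ← hembC]
    have hMeq : c.1 = c'.1 := by
      apply matrix_eq_of_data c.1 c'.1 (rowFinset c.1) (rowFinset c.1ᵀ)
      · exact rowFinset_span c.1
      · rw [show rowFinset c.1ᵀ = rowFinset c'.1ᵀ from hCC]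
        exact rowFinset_span c'.1ᵀ
      · exact hR
      · exact hC
    exact Subtype.ext hMeq
  have hcardle : Nat.card S ≤ Nat.card T := Nat.card_le_card_of_injective F hFinj
  have hTcard : Nat.card T = (Δ.choose r) * (Δ.choose r) * (Nat.card Vt ^ r * Nat.card Vt ^ r) := by
    rw [hT, Nat.card_eq_fintype_card, Fintype.card_prod, Fintype.card_prod, Fintype.card_prod]
    simp only [Fintype.card_fun, Fintype.card_fin, Fintype.card_finset_len,
      Nat.card_eq_fintype_card]
    ring
  -- real bounds
  have hA : (Δ.choose r : ℝ) ≤ (2:ℝ) ^ ((Δ:ℝ) * binEnt (r/Δ)) := choose_le_ent Δ r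
  have hB : ((Nat.card Vt : ℕ) : ℝ) ≤ (2:ℝ) ^ ((Δ:ℝ) * binEnt (t/Δ)) := by
    refine le_trans ?_ (sum_choose_le_ent Δ t ht)
    exact_mod_cast Nat.cast_le.mpr (card_lowweight Δ t)
  set a : ℝ := (Δ:ℝ) * binEnt (r/Δ) with ha
  set b : ℝ := (Δ:ℝ) * binEnt (t/Δ) with hb
  have hA0 : (0:ℝ) ≤ (Δ.choose r : ℝ) := by positivity
  have hB0 : (0:ℝ) ≤ ((Nat.card Vt : ℕ) : ℝ) := by positivity
  calc (Nat.card S : ℝ) ≤ (Nat.card T : ℝ) := by exact_mod_cast hcardle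
    _ = (Δ.choose r : ℝ) * (Δ.choose r) * ((Nat.card Vt : ℝ)^r * (Nat.card Vt : ℝ)^r) := by
        rw [hTcard]; push_cast; ring
    _ ≤ ((2:ℝ)^a) * ((2:ℝ)^a) * (((2:ℝ)^b)^r * ((2:ℝ)^b)^r) := by
        gcongr
    _ = (2 : ℝ) ^ (2 * (r : ℝ) * Δ * binEnt (t / Δ) + 2 * (Δ : ℝ) * binEnt (r / Δ)) := by
        rw [← Real.rpow_natCast ((2:ℝ)^b) r, ← Real.rpow_mul (by norm_num : (0:ℝ) ≤ 2),
          ← Real.rpow_add two_pos, ← Real.rpow_add two_pos, ← Real.rpow_add two_pos]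
        congr 1
        rw [ha, hb]
        ring
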